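/- (Key expansion for the composition method, Theorem 7) Under the composition setup, for every θ ∈ ℝ, ∫₀¹∫₀¹ (Y(θ+δ, u, v) − Y(θ−δ, u, v))² du dv = M(θ)·δ + o(δ) as δ → 0⁺, where M(θ) = 2·Σ_{i=1}^{m−1} (∫₀¹ (Q_{i+1}(v) − Q_i(v))² dv)·|ρ_i'(θ)|. Consequently, if M(θ) > 0 and L is bounded, the variance of the common-random-number finite-difference derivative estimate h = (Y(θ+δ,u,v) − Y(θ−δ,u,v))/(2δ), with (u,v) uniform on [0,1)², is of order 1/δ rather than 1/δ². -/

import Mathlib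

open MeasureTheory Asymptotics Topology

lemma sum_Icc_one_eq_range (n : ℕ) (f : ℕ → ℝ) :
    ∑ i ∈ Finset.Icc 1 n, f i = ∑ i ∈ Finset.range n, f (i + 1) := by
  rw [← Finset.Ico_add_one_right_eq_Icc, Finset.sum_Ico_eq_sum_range]
  simp [add_comm]

lemma abel_indicator (m : ℕ) (hm : 1 ≤ m) (r q : ℕ → ℝ) (u : ℝ)
    (hmono : ∀ i, i < m → r i ≤ r (i + 1)) (h0 : r 0 ≤ u) (h1 : u < r m) :
    ∑ i ∈ Finset.Icc 1 m, Set.indicator (Set.Ico (r (i - 1)) (r i)) (fun _ => q i) u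
      = q 1 + ∑ i ∈ Finset.Icc 1 (m - 1),
          (q (i + 1) - q i) * (if r i ≤ u then (1:ℝ) else 0) := by
  obtain ⟨k, rfl⟩ : ∃ k, m = k + 1 := ⟨m - 1, (Nat.succ_pred_eq_of_pos hm).symm⟩
  set W : ℕ → ℝ := fun i => if r i ≤ u then (1:ℝ) else 0 with hW
  have hterm : ∀ i ∈ Finset.Icc 1 (k + 1),
      Set.indicator (Set.Ico (r (i - 1)) (r i)) (fun _ => q i) u
        = q i * (W (i - 1) - W i) := by
    intro i hi
    simp only [Finset.mem_Icc] at hi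
    have hle : r (i - 1) ≤ r i := by
      have h' := hmono (i - 1) (by omega)
      rwa [show i - 1 + 1 = i by omega] at h'
    by_cases hB : r i ≤ u
    · have hA : r (i - 1) ≤ u := le_trans hle hB
      rw [Set.indicator_of_notMem (fun h => absurd (Set.mem_Ico.mp h).2 (not_lt.2 hB))]
      simp [hW, hA, hB]
    · by_cases hA : r (i - 1) ≤ u
      · rw [Set.indicator_of_mem (Set.mem_Ico.mpr ⟨hA, not_le.1 hB⟩)]
        simp [hW, hA, hB]
      · rw [Set.indicator_of_notMem (fun h => absurd (Set.mem_Ico.mp h).1 hA)]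
        simp [hW, hA, hB]
  rw [Finset.sum_congr rfl hterm]
  rw [sum_Icc_one_eq_range, sum_Icc_one_eq_range]
  simp only [Nat.add_sub_cancel]
  have hWj : ∀ j, (if r j ≤ u then (1:ℝ) else 0) = W j := fun j => rfl
  simp only [hWj]
  have expand : ∑ i ∈ Finset.range (k + 1), q (i + 1) * (W i - W (i + 1))
      = (∑ i ∈ Finset.range (k + 1), q (i + 1) * W i)
        - ∑ i ∈ Finset.range (k + 1), q (i + 1) * W (i + 1) := by
    rw [← Finset.sum_sub_distrib]
    exact Finset.sum_congr rfl fun i _ => by ring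
  rw [expand, Finset.sum_range_succ' (fun i => q (i + 1) * W i) k,
    Finset.sum_range_succ (fun i => q (i + 1) * W (i + 1)) k]
  have hW0 : W 0 = 1 := if_pos h0
  have hWm : W (k + 1) = 0 := if_neg (not_le.2 h1)
  rw [hW0, hWm]
  have : ∑ i ∈ Finset.range k, (q (i + 1 + 1) - q (i + 1)) * W (i + 1)
      = ∑ i ∈ Finset.range k, (q (i + 1 + 1) * W (i + 1) - q (i + 1) * W (i + 1)) :=
    Finset.sum_congr rfl fun i _ => by ring
  rw [this, Finset.sum_sub_distrib]
  ring

lemma chi_diff (x y u : ℝ) :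
    (if x ≤ u then (1:ℝ) else 0) - (if y ≤ u then (1:ℝ) else 0)
      = Set.indicator (Set.Ico (min x y) (max x y)) (fun _ => if x ≤ y then (1:ℝ) else -1) u := by
  simp only [Set.indicator_apply, Set.mem_Ico, min_def, max_def]
  split_ifs <;> simp_all <;> linarith

lemma sq_sum_indicator (t : Finset ℕ) (J : ℕ → Set ℝ) (w : ℕ → ℝ) (u : ℝ)
    (hdisj : ∀ i ∈ t, ∀ j ∈ t, i ≠ j → ∀ x, x ∈ J i → x ∉ J j) :
    (∑ i ∈ t, Set.indicator (J i) (fun _ => w i) u) ^ 2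
      = ∑ i ∈ t, Set.indicator (J i) (fun _ => (w i) ^ 2) u := by
  by_cases hex : ∃ i ∈ t, u ∈ J i
  · obtain ⟨i, hi, hu⟩ := hex
    rw [Finset.sum_eq_single_of_mem i hi
        (fun j hj hne => Set.indicator_of_notMem (hdisj i hi j hj (Ne.symm hne) u hu) _),
      Finset.sum_eq_single_of_mem i hi
        (fun j hj hne => Set.indicator_of_notMem (hdisj i hi j hj (Ne.symm hne) u hu) _),
      Set.indicator_of_mem hu, Set.indicator_of_mem hu]
  · push_neg at hex
    rw [Finset.sum_eq_zero (fun i hi => Set.indicator_of_notMem (hex i hi) _),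
      Finset.sum_eq_zero (fun i hi => Set.indicator_of_notMem (hex i hi) _)]
    norm_num

lemma integral_sum_indicator (k : ℕ) (a b : ℕ → ℝ) (g : ℕ → ℝ → ℝ)
    (hab : ∀ i ∈ Finset.Icc 1 k, a i ≤ b i)
    (h0 : ∀ i ∈ Finset.Icc 1 k, 0 ≤ a i) (h1 : ∀ i ∈ Finset.Icc 1 k, b i ≤ 1)
    (hmeas : ∀ i, Measurable (g i)) (C : ℝ)
    (hbdd : ∀ i ∈ Finset.Icc 1 k, ∀ v, |g i v| ≤ C) :
    (∫ u in Set.Ico (0:ℝ) 1, ∫ v in Set.Ico (0:ℝ) 1,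
        ∑ i ∈ Finset.Icc 1 k, Set.indicator (Set.Ico (a i) (b i)) (fun _ => g i v) u)
      = ∑ i ∈ Finset.Icc 1 k, (∫ v in Set.Ico (0:ℝ) 1, g i v) * (b i - a i) := by
  haveI : IsFiniteMeasure (volume.restrict (Set.Ico (0:ℝ) 1)) :=
    ⟨by rw [Measure.restrict_apply_univ]; simp [Real.volume_Ico]⟩
  have hgint : ∀ i ∈ Finset.Icc 1 k, Integrable (g i) (volume.restrict (Set.Ico (0:ℝ) 1)) := by
    intro i hi
    exact (integrable_const C).mono' (hmeas i).aestronglyMeasurable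
      (ae_of_all _ fun v => by simpa [Real.norm_eq_abs] using hbdd i hi v)
  have inner_eq : ∀ u : ℝ, (∫ v in Set.Ico (0:ℝ) 1,
      ∑ i ∈ Finset.Icc 1 k, Set.indicator (Set.Ico (a i) (b i)) (fun _ => g i v) u)
      = ∑ i ∈ Finset.Icc 1 k,
          Set.indicator (Set.Ico (a i) (b i)) (fun _ => (1:ℝ)) u * ∫ v in Set.Ico (0:ℝ) 1, g i v := by
    intro u
    have hpt : ∀ (v : ℝ) (i : ℕ), Set.indicator (Set.Ico (a i) (b i)) (fun _ => g i v) u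
        = Set.indicator (Set.Ico (a i) (b i)) (fun _ => (1:ℝ)) u * g i v := by
      intro v i; simp only [Set.indicator_apply]; split_ifs <;> ring
    simp only [hpt]
    rw [integral_finset_sum _ (fun i hi => (hgint i hi).const_mul _)]
    exact Finset.sum_congr rfl fun i hi => integral_const_mul _ _
  simp only [inner_eq]
  rw [integral_finset_sum _ (fun i hi =>
    ((integrable_const (1:ℝ)).indicator measurableSet_Ico).mul_const _)]
  refine Finset.sum_congr rfl fun i hi => ?_
  rw [integral_mul_const, setIntegral_indicator measurableSet_Ico,
    Set.inter_eq_self_of_subset_right (Set.Ico_subset_Ico (h0 i hi) (h1 i hi))]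
  simp [Real.volume_Ico, ENNReal.toReal_ofReal (sub_nonneg.2 (hab i hi)), mul_comm, hab i hi]

/-- Key expansion for the composition method (Theorem 7): with common random
numbers `(u, v)` uniform on `[0,1)²`, the mean squared difference of the
composition-method outputs at `θ ± δ` expands as `M(θ)·δ + o(δ)` as
`δ → 0⁺`; consequently, if `M(θ) > 0`, the variance of the
finite-difference derivative estimate is of order `1/δ`. -/
theorem composition_method_expansion
    (m : ℕ) (hm : 2 ≤ m)
    (p : ℕ → ℝ → ℝ)
    (hp_pos : ∀ i ∈ Finset.Icc 1 m, ∀ x : ℝ, 0 < p i x)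
    (hp_diff : ∀ i ∈ Finset.Icc 1 m, Differentiable ℝ (p i))
    (hp_sum : ∀ x : ℝ, ∑ i ∈ Finset.Icc 1 m, p i x = 1)
    (ρ : ℕ → ℝ → ℝ) (hρ : ∀ i x, ρ i x = ∑ j ∈ Finset.Icc 1 i, p j x)
    (Q : ℕ → ℝ → ℝ) (hQmeas : ∀ i, Measurable (Q i))
    (Cq : ℝ) (hQbdd : ∀ i ∈ Finset.Icc 1 m, ∀ v : ℝ, |Q i v| ≤ Cq)
    (Y : ℝ → ℝ → ℝ → ℝ)
    (hY : ∀ x u v, Y x u v = ∑ i ∈ Finset.Icc 1 m,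
      Set.indicator (Set.Ico (ρ (i - 1) x) (ρ i x)) (fun _ => Q i v) u)
    (M : ℝ → ℝ)
    (hM : ∀ x, M x = 2 * ∑ i ∈ Finset.Icc 1 (m - 1),
      (∫ v in Set.Ico (0 : ℝ) 1, (Q (i + 1) v - Q i v) ^ 2) * |deriv (ρ i) x|)
    (θ : ℝ) :
    ((fun δ : ℝ =>
        (∫ u in Set.Ico (0 : ℝ) 1, ∫ v in Set.Ico (0 : ℝ) 1,
          (Y (θ + δ) u v - Y (θ - δ) u v) ^ 2) - M θ * δ)
      =o[nhdsWithin 0 (Set.Ioi 0)] fun δ => δ) ∧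
    (0 < M θ →
      (fun δ : ℝ =>
          (∫ u in Set.Ico (0 : ℝ) 1, ∫ v in Set.Ico (0 : ℝ) 1,
            (Y (θ + δ) u v - Y (θ - δ) u v) ^ 2) / (4 * δ ^ 2)
          - (∫ u in Set.Ico (0 : ℝ) 1, ∫ v in Set.Ico (0 : ℝ) 1,
              (Y (θ + δ) u v - Y (θ - δ) u v) / (2 * δ)) ^ 2)
        =O[nhdsWithin 0 (Set.Ioi 0)] fun δ => 1 / δ) := by
  have hCq : 0 ≤ Cq :=
    le_trans (abs_nonneg _) (hQbdd 1 (Finset.mem_Icc.mpr ⟨le_refl 1, by omega⟩) 0)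
  -- basic facts about ρ
  have hρdiff : ∀ i, i ≤ m → Differentiable ℝ (ρ i) := by
    intro i hi
    have : ρ i = fun x => ∑ j ∈ Finset.Icc 1 i, p j x := funext fun x => hρ i x
    rw [this]
    exact Differentiable.fun_sum fun j hj => hp_diff j (Finset.mem_Icc.mpr
      ⟨(Finset.mem_Icc.mp hj).1, le_trans (Finset.mem_Icc.mp hj).2 hi⟩)
  have hρmono : ∀ x : ℝ, ∀ i, i < m → ρ i x < ρ (i + 1) x := by
    intro x i hi
    rw [hρ, hρ, Finset.sum_Icc_succ_top (Nat.le_add_left 1 i)]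
    have := hp_pos (i + 1) (Finset.mem_Icc.mpr ⟨by omega, by omega⟩) x
    linarith
  have hρmono' : ∀ x : ℝ, ∀ i j, i ≤ j → j ≤ m → ρ i x ≤ ρ j x := by
    intro x i j hij hjm
    rw [hρ, hρ]
    refine Finset.sum_le_sum_of_subset_of_nonneg (Finset.Icc_subset_Icc_right hij) ?_
    intro ℓ hℓ _
    exact (hp_pos ℓ (Finset.mem_Icc.mpr ⟨(Finset.mem_Icc.mp hℓ).1,
      le_trans (Finset.mem_Icc.mp hℓ).2 hjm⟩) x).le
  have hρ0 : ∀ x : ℝ, ρ 0 x = 0 := fun x => by rw [hρ]; simp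
  have hρm : ∀ x : ℝ, ρ m x = 1 := fun x => by rw [hρ]; exact hp_sum x
  have hρnn : ∀ x : ℝ, ∀ i, i ≤ m → 0 ≤ ρ i x := by
    intro x i hi
    have := hρmono' x 0 i (Nat.zero_le i) hi
    rwa [hρ0] at this
  have hρle1 : ∀ x : ℝ, ∀ i, i ≤ m → ρ i x ≤ 1 := by
    intro x i hi
    have := hρmono' x i m hi le_rfl
    rwa [hρm] at this
  -- tendsto facts
  have tplus : ∀ i, i ≤ m → Filter.Tendsto (fun δ : ℝ => ρ i (θ + δ))
      (nhdsWithin 0 (Set.Ioi 0)) (𝓝 (ρ i θ)) := by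
    intro i hi
    have h : Filter.Tendsto (fun δ : ℝ => θ + δ) (𝓝 0) (𝓝 θ) := by
      simpa using (continuous_const.fun_add continuous_id).tendsto (0:ℝ)
    exact ((((hρdiff i hi).continuous).tendsto θ).comp h).mono_left nhdsWithin_le_nhds
  have tminus : ∀ i, i ≤ m → Filter.Tendsto (fun δ : ℝ => ρ i (θ - δ))
      (nhdsWithin 0 (Set.Ioi 0)) (𝓝 (ρ i θ)) := by
    intro i hi
    have h : Filter.Tendsto (fun δ : ℝ => θ - δ) (𝓝 0) (𝓝 θ) := by
      simpa using (continuous_const.fun_sub continuous_id).tendsto (0:ℝ)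
    exact ((((hρdiff i hi).continuous).tendsto θ).comp h).mono_left nhdsWithin_le_nhds
  -- eventual separation
  have hsep : ∀ᶠ δ in nhdsWithin (0:ℝ) (Set.Ioi 0), ∀ i ∈ Finset.Icc 1 (m - 2),
      ρ i (θ + δ) < ρ (i + 1) (θ - δ) ∧ ρ i (θ - δ) < ρ (i + 1) (θ + δ) := by
    rw [Filter.eventually_all_finset]
    intro i hi
    have him : i ≤ m - 2 := (Finset.mem_Icc.mp hi).2
    have hlt : ρ i θ < ρ (i + 1) θ := hρmono θ i (by omega)
    exact Filter.Eventually.and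
      ((tplus i (by omega)).eventually_lt (tminus (i + 1) (by omega)) hlt)
      ((tminus i (by omega)).eventually_lt (tplus (i + 1) (by omega)) hlt)
  -- little-o from differentiability
  have he : ∀ i ∈ Finset.Icc 1 (m - 1),
      (fun δ : ℝ => ρ i (θ + δ) - ρ i (θ - δ) - δ * (2 * deriv (ρ i) θ))
        =o[nhdsWithin 0 (Set.Ioi 0)] (fun δ => δ) := by
    intro i hi
    have him : i ≤ m := by have := (Finset.mem_Icc.mp hi).2; omega
    have hdi : DifferentiableAt ℝ (ρ i) θ := (hρdiff i him).differentiableAt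
    have h1 : HasDerivAt (fun δ : ℝ => θ + δ) 1 0 := by
      simpa using (hasDerivAt_id (0:ℝ)).const_add θ
    have h2 : HasDerivAt (fun δ : ℝ => θ - δ) (-1) 0 := by
      simpa using (hasDerivAt_id (0:ℝ)).const_sub θ
    have hρθ1 : HasDerivAt (ρ i) (deriv (ρ i) θ) ((fun δ : ℝ => θ + δ) 0) := by
      simpa using hdi.hasDerivAt
    have hρθ2 : HasDerivAt (ρ i) (deriv (ρ i) θ) ((fun δ : ℝ => θ - δ) 0) := by
      simpa using hdi.hasDerivAt
    have H1 : HasDerivAt (fun δ : ℝ => ρ i (θ + δ)) (deriv (ρ i) θ * 1) 0 :=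
      hρθ1.comp 0 h1
    have H2 : HasDerivAt (fun δ : ℝ => ρ i (θ - δ)) (deriv (ρ i) θ * (-1)) 0 :=
      hρθ2.comp 0 h2
    have H : HasDerivAt (fun δ : ℝ => ρ i (θ + δ) - ρ i (θ - δ)) (2 * deriv (ρ i) θ) 0 := by
      have := H1.sub H2
      exact this.congr_deriv (by ring)
    have h0 := hasDerivAt_iff_isLittleO.mp H
    simp only [sub_zero, add_zero, smul_eq_mul] at h0
    have h0' : (fun δ : ℝ => ρ i (θ + δ) - ρ i (θ - δ) - δ * (2 * deriv (ρ i) θ))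
        =o[𝓝 0] (fun δ => δ) := by
      refine h0.congr' ?_ (by rfl)
      filter_upwards with δ
      ring_nf
    exact h0'.mono nhdsWithin_le_nhds
  -- the key eventual identity
  have key : ∀ᶠ δ in nhdsWithin (0:ℝ) (Set.Ioi 0),
      ((∫ u in Set.Ico (0:ℝ) 1, ∫ v in Set.Ico (0:ℝ) 1, (Y (θ + δ) u v - Y (θ - δ) u v) ^ 2)
        = ∑ i ∈ Finset.Icc 1 (m - 1),
            (∫ v in Set.Ico (0:ℝ) 1, (Q (i + 1) v - Q i v) ^ 2) * |ρ i (θ + δ) - ρ i (θ - δ)|)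
      ∧ |∫ u in Set.Ico (0:ℝ) 1, ∫ v in Set.Ico (0:ℝ) 1, (Y (θ + δ) u v - Y (θ - δ) u v)|
        ≤ 2 * Cq * ∑ i ∈ Finset.Icc 1 (m - 1), |ρ i (θ + δ) - ρ i (θ - δ)| := by
    filter_upwards [hsep] with δ hP
    have hconsec : ∀ i, 1 ≤ i → i + 1 ≤ m - 1 →
        max (ρ i (θ + δ)) (ρ i (θ - δ)) ≤ min (ρ (i+1) (θ + δ)) (ρ (i+1) (θ - δ)) := by
      intro i h1 h2
      have hP' := hP i (Finset.mem_Icc.mpr ⟨h1, by omega⟩)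
      exact max_le (le_min (hρmono' (θ + δ) i (i+1) (by omega) (by omega)) hP'.1.le)
        (le_min hP'.2.le (hρmono' (θ - δ) i (i+1) (by omega) (by omega)))
    have hchain : ∀ j i, 1 ≤ i → i < j → j ≤ m - 1 →
        max (ρ i (θ + δ)) (ρ i (θ - δ)) ≤ min (ρ j (θ + δ)) (ρ j (θ - δ)) := by
      intro j
      induction j with
      | zero => intro i _ h _; omega
      | succ n ih =>
        intro i h1 hij hj
        rcases Nat.lt_succ_iff_lt_or_eq.mp hij with h | h
        · refine le_trans (ih i h1 h (by omega)) (le_trans ?_ (hconsec n (by omega) (by omega)))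
          exact le_trans (min_le_left _ _) (le_max_left _ _)
        · subst h; exact hconsec i h1 (by omega)
    have hdisj : ∀ i ∈ Finset.Icc 1 (m-1), ∀ j ∈ Finset.Icc 1 (m-1), i ≠ j →
        ∀ x : ℝ, x ∈ Set.Ico (min (ρ i (θ+δ)) (ρ i (θ-δ))) (max (ρ i (θ+δ)) (ρ i (θ-δ))) →
          x ∉ Set.Ico (min (ρ j (θ+δ)) (ρ j (θ-δ))) (max (ρ j (θ+δ)) (ρ j (θ-δ))) := by
      intro i hi j hj hne x hxi hxj
      simp only [Finset.mem_Icc] at hi hj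
      obtain ⟨hxi1, hxi2⟩ := Set.mem_Ico.mp hxi
      obtain ⟨hxj1, hxj2⟩ := Set.mem_Ico.mp hxj
      rcases Nat.lt_or_ge i j with h | h
      · have := hchain j i hi.1 h hj.2
        linarith
      · have := hchain i j hj.1 (by omega) hi.2
        linarith
    -- pointwise representation
    have hrep : ∀ u ∈ Set.Ico (0:ℝ) 1, ∀ v : ℝ,
        Y (θ + δ) u v - Y (θ - δ) u v
          = ∑ i ∈ Finset.Icc 1 (m - 1),
              Set.indicator (Set.Ico (min (ρ i (θ+δ)) (ρ i (θ-δ))) (max (ρ i (θ+δ)) (ρ i (θ-δ))))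
                (fun _ => (if ρ i (θ+δ) ≤ ρ i (θ-δ) then (1:ℝ) else -1) * (Q (i+1) v - Q i v)) u := by
      intro u hu v
      rw [hY, hY,
        abel_indicator m (by omega) (fun i => ρ i (θ + δ)) (fun i => Q i v) u
          (fun i hi => (hρmono (θ+δ) i hi).le)
          (by show ρ 0 (θ+δ) ≤ u; rw [hρ0]; exact hu.1)
          (by show u < ρ m (θ+δ); rw [hρm]; exact hu.2),
        abel_indicator m (by omega) (fun i => ρ i (θ - δ)) (fun i => Q i v) u
          (fun i hi => (hρmono (θ-δ) i hi).le)
          (by show ρ 0 (θ-δ) ≤ u; rw [hρ0]; exact hu.1)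
          (by show u < ρ m (θ-δ); rw [hρm]; exact hu.2)]
      have hcomb : ∀ a b c : ℝ, a + b - (a + c) = b - c := fun a b c => by ring
      rw [hcomb, ← Finset.sum_sub_distrib]
      refine Finset.sum_congr rfl fun i hi => ?_
      rw [← mul_sub, chi_diff]
      simp only [Set.indicator_apply]
      split_ifs <;> ring
    -- squared representation
    have hsq : ∀ u ∈ Set.Ico (0:ℝ) 1, ∀ v : ℝ,
        (Y (θ + δ) u v - Y (θ - δ) u v) ^ 2
          = ∑ i ∈ Finset.Icc 1 (m - 1),
              Set.indicator (Set.Ico (min (ρ i (θ+δ)) (ρ i (θ-δ))) (max (ρ i (θ+δ)) (ρ i (θ-δ))))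
                (fun _ => (Q (i+1) v - Q i v) ^ 2) u := by
      intro u hu v
      rw [hrep u hu v,
        sq_sum_indicator (Finset.Icc 1 (m-1))
          (fun i => Set.Ico (min (ρ i (θ+δ)) (ρ i (θ-δ))) (max (ρ i (θ+δ)) (ρ i (θ-δ))))
          (fun i => (if ρ i (θ+δ) ≤ ρ i (θ-δ) then (1:ℝ) else -1) * (Q (i+1) v - Q i v)) u hdisj]
      refine Finset.sum_congr rfl fun i hi => ?_
      simp only [Set.indicator_apply]
      split_ifs <;> ring
    have hmem : ∀ i, i ∈ Finset.Icc 1 (m-1) → i ≤ m ∧ i + 1 ≤ m := by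
      intro i hi
      have := (Finset.mem_Icc.mp hi).2
      omega
    constructor
    · -- squared integral
      have step1 : (∫ u in Set.Ico (0:ℝ) 1, ∫ v in Set.Ico (0:ℝ) 1,
            (Y (θ + δ) u v - Y (θ - δ) u v) ^ 2)
          = ∫ u in Set.Ico (0:ℝ) 1, ∫ v in Set.Ico (0:ℝ) 1,
              ∑ i ∈ Finset.Icc 1 (m-1),
                Set.indicator (Set.Ico (min (ρ i (θ+δ)) (ρ i (θ-δ))) (max (ρ i (θ+δ)) (ρ i (θ-δ))))
                  (fun _ => (Q (i+1) v - Q i v) ^ 2) u := by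
        refine setIntegral_congr_fun measurableSet_Ico fun u hu => ?_
        exact integral_congr_ae (Filter.Eventually.of_forall fun v => hsq u hu v)
      rw [step1, integral_sum_indicator (m-1) _ _
          (fun i v => (Q (i+1) v - Q i v) ^ 2)
          (fun i hi => min_le_max)
          (fun i hi => le_min (hρnn _ i (hmem i hi).1) (hρnn _ i (hmem i hi).1))
          (fun i hi => max_le (hρle1 _ i (hmem i hi).1) (hρle1 _ i (hmem i hi).1))
          (fun i => ((hQmeas (i+1)).sub (hQmeas i)).pow_const 2)
          ((2*Cq)^2)
          (fun i hi v => by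
            have h1 : |Q (i+1) v - Q i v| ≤ 2 * Cq := by
              have ha := hQbdd (i+1) (Finset.mem_Icc.mpr ⟨by omega, (hmem i hi).2⟩) v
              have hb := hQbdd i (Finset.mem_Icc.mpr ⟨(Finset.mem_Icc.mp hi).1, (hmem i hi).1⟩) v
              calc |Q (i+1) v - Q i v| ≤ |Q (i+1) v| + |Q i v| := abs_sub _ _
                _ ≤ 2 * Cq := by linarith
            calc |(Q (i+1) v - Q i v) ^ 2| = |Q (i+1) v - Q i v| ^ 2 := abs_pow _ 2
              _ ≤ (2*Cq) ^ 2 := pow_le_pow_left₀ (abs_nonneg _) h1 2)]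
      exact Finset.sum_congr rfl fun i hi => by rw [max_sub_min_eq_abs, abs_sub_comm]
    · -- linear integral bound
      have step1 : (∫ u in Set.Ico (0:ℝ) 1, ∫ v in Set.Ico (0:ℝ) 1,
            (Y (θ + δ) u v - Y (θ - δ) u v))
          = ∫ u in Set.Ico (0:ℝ) 1, ∫ v in Set.Ico (0:ℝ) 1,
              ∑ i ∈ Finset.Icc 1 (m-1),
                Set.indicator (Set.Ico (min (ρ i (θ+δ)) (ρ i (θ-δ))) (max (ρ i (θ+δ)) (ρ i (θ-δ))))
                  (fun _ => (if ρ i (θ+δ) ≤ ρ i (θ-δ) then (1:ℝ) else -1) * (Q (i+1) v - Q i v)) u := by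
        refine setIntegral_congr_fun measurableSet_Ico fun u hu => ?_
        exact integral_congr_ae (Filter.Eventually.of_forall fun v => hrep u hu v)
      have hgbdd : ∀ i ∈ Finset.Icc 1 (m-1), ∀ v : ℝ,
          |(if ρ i (θ+δ) ≤ ρ i (θ-δ) then (1:ℝ) else -1) * (Q (i+1) v - Q i v)| ≤ 2 * Cq := by
        intro i hi v
        have ha := hQbdd (i+1) (Finset.mem_Icc.mpr ⟨by omega, (hmem i hi).2⟩) v
        have hb := hQbdd i (Finset.mem_Icc.mpr ⟨(Finset.mem_Icc.mp hi).1, (hmem i hi).1⟩) v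
        rw [abs_mul]
        have hσ : |(if ρ i (θ+δ) ≤ ρ i (θ-δ) then (1:ℝ) else -1)| = 1 := by
          split_ifs <;> simp
        rw [hσ, one_mul]
        calc |Q (i+1) v - Q i v| ≤ |Q (i+1) v| + |Q i v| := abs_sub _ _
          _ ≤ 2 * Cq := by linarith
      rw [step1, integral_sum_indicator (m-1) _ _
          (fun i v => (if ρ i (θ+δ) ≤ ρ i (θ-δ) then (1:ℝ) else -1) * (Q (i+1) v - Q i v))
          (fun i hi => min_le_max)
          (fun i hi => le_min (hρnn _ i (hmem i hi).1) (hρnn _ i (hmem i hi).1))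
          (fun i hi => max_le (hρle1 _ i (hmem i hi).1) (hρle1 _ i (hmem i hi).1))
          (fun i => (measurable_const.mul ((hQmeas (i+1)).sub (hQmeas i))))
          (2*Cq) hgbdd]
      haveI : IsFiniteMeasure (volume.restrict (Set.Ico (0:ℝ) 1)) :=
        ⟨by rw [Measure.restrict_apply_univ]; simp [Real.volume_Ico]⟩
      refine le_trans (Finset.abs_sum_le_sum_abs _ _) ?_
      rw [Finset.mul_sum]
      refine Finset.sum_le_sum fun i hi => ?_
      rw [abs_mul]
      have hmaxmin : |max (ρ i (θ+δ)) (ρ i (θ-δ)) - min (ρ i (θ+δ)) (ρ i (θ-δ))|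
          = |ρ i (θ+δ) - ρ i (θ-δ)| := by
        rw [max_sub_min_eq_abs, abs_abs, abs_sub_comm]
      rw [hmaxmin]
      have hIab : |∫ v in Set.Ico (0:ℝ) 1,
          (if ρ i (θ+δ) ≤ ρ i (θ-δ) then (1:ℝ) else -1) * (Q (i+1) v - Q i v)| ≤ 2 * Cq := by
        have hb := norm_integral_le_of_norm_le_const
          (μ := volume.restrict (Set.Ico (0:ℝ) 1)) (C := 2*Cq)
          (f := fun v => (if ρ i (θ+δ) ≤ ρ i (θ-δ) then (1:ℝ) else -1) * (Q (i+1) v - Q i v))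
          (ae_of_all _ fun v => by simpa [Real.norm_eq_abs] using hgbdd i hi v)
        simpa [Real.norm_eq_abs, Measure.restrict_apply_univ, Real.volume_Ico] using hb
      exact mul_le_mul_of_nonneg_right hIab (abs_nonneg _)
  -- nonnegativity of the coefficients
  have hcnn : ∀ i : ℕ, 0 ≤ ∫ v in Set.Ico (0:ℝ) 1, (Q (i+1) v - Q i v) ^ 2 :=
    fun i => integral_nonneg fun v => sq_nonneg _
  -- Part 1
  have part1 : (fun δ : ℝ =>
        (∫ u in Set.Ico (0 : ℝ) 1, ∫ v in Set.Ico (0 : ℝ) 1,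
          (Y (θ + δ) u v - Y (θ - δ) u v) ^ 2) - M θ * δ)
      =o[nhdsWithin 0 (Set.Ioi 0)] fun δ : ℝ => δ := by
    have hgo : (fun δ : ℝ => ∑ i ∈ Finset.Icc 1 (m-1),
        (∫ v in Set.Ico (0:ℝ) 1, (Q (i+1) v - Q i v) ^ 2)
          * |ρ i (θ + δ) - ρ i (θ - δ) - δ * (2 * deriv (ρ i) θ)|)
        =o[nhdsWithin (0:ℝ) (Set.Ioi 0)] fun δ : ℝ => δ := by
      refine IsLittleO.fun_sum fun i hi => ?_
      have := ((he i hi).norm_left).const_mul_left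
        (∫ v in Set.Ico (0:ℝ) 1, (Q (i+1) v - Q i v) ^ 2)
      simpa [Real.norm_eq_abs] using this
    have hOb : (fun δ : ℝ =>
        (∫ u in Set.Ico (0 : ℝ) 1, ∫ v in Set.Ico (0 : ℝ) 1,
          (Y (θ + δ) u v - Y (θ - δ) u v) ^ 2) - M θ * δ)
        =O[nhdsWithin (0:ℝ) (Set.Ioi 0)] (fun δ : ℝ => ∑ i ∈ Finset.Icc 1 (m-1),
          (∫ v in Set.Ico (0:ℝ) 1, (Q (i+1) v - Q i v) ^ 2)
            * |ρ i (θ + δ) - ρ i (θ - δ) - δ * (2 * deriv (ρ i) θ)|) := by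
      rw [isBigO_iff]
      refine ⟨1, ?_⟩
      filter_upwards [key, self_mem_nhdsWithin] with δ hkey hδpos
      rw [one_mul, hkey.1]
      have hδ0 : (0:ℝ) < δ := hδpos
      have hMδ : M θ * δ = ∑ i ∈ Finset.Icc 1 (m-1),
          (∫ v in Set.Ico (0:ℝ) 1, (Q (i+1) v - Q i v) ^ 2)
            * (2 * |deriv (ρ i) θ| * δ) := by
        rw [hM θ, Finset.mul_sum, Finset.sum_mul]
        exact Finset.sum_congr rfl fun i _ => by ring
      rw [hMδ, ← Finset.sum_sub_distrib]
      have hterm : ∀ i ∈ Finset.Icc 1 (m-1),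
          |(∫ v in Set.Ico (0:ℝ) 1, (Q (i+1) v - Q i v) ^ 2) * |ρ i (θ + δ) - ρ i (θ - δ)|
            - (∫ v in Set.Ico (0:ℝ) 1, (Q (i+1) v - Q i v) ^ 2) * (2 * |deriv (ρ i) θ| * δ)|
          ≤ (∫ v in Set.Ico (0:ℝ) 1, (Q (i+1) v - Q i v) ^ 2)
            * |ρ i (θ + δ) - ρ i (θ - δ) - δ * (2 * deriv (ρ i) θ)| := by
        intro i hi
        rw [← mul_sub, abs_mul, abs_of_nonneg (hcnn i)]
        refine mul_le_mul_of_nonneg_left ?_ (hcnn i)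
        have h2 : 2 * |deriv (ρ i) θ| * δ = |δ * (2 * deriv (ρ i) θ)| := by
          rw [abs_mul, abs_mul, abs_two, abs_of_pos hδ0]
          ring
        rw [h2]
        exact abs_abs_sub_abs_le_abs_sub _ _
      calc ‖∑ i ∈ Finset.Icc 1 (m-1),
            ((∫ v in Set.Ico (0:ℝ) 1, (Q (i+1) v - Q i v) ^ 2) * |ρ i (θ + δ) - ρ i (θ - δ)|
              - (∫ v in Set.Ico (0:ℝ) 1, (Q (i+1) v - Q i v) ^ 2)
                * (2 * |deriv (ρ i) θ| * δ))‖
          ≤ ∑ i ∈ Finset.Icc 1 (m-1),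
            |(∫ v in Set.Ico (0:ℝ) 1, (Q (i+1) v - Q i v) ^ 2) * |ρ i (θ + δ) - ρ i (θ - δ)|
              - (∫ v in Set.Ico (0:ℝ) 1, (Q (i+1) v - Q i v) ^ 2)
                * (2 * |deriv (ρ i) θ| * δ)| := by
            rw [Real.norm_eq_abs]; exact Finset.abs_sum_le_sum_abs _ _
        _ ≤ ∑ i ∈ Finset.Icc 1 (m-1),
            (∫ v in Set.Ico (0:ℝ) 1, (Q (i+1) v - Q i v) ^ 2)
              * |ρ i (θ + δ) - ρ i (θ - δ) - δ * (2 * deriv (ρ i) θ)| :=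
            Finset.sum_le_sum hterm
        _ ≤ ‖∑ i ∈ Finset.Icc 1 (m-1),
            (∫ v in Set.Ico (0:ℝ) 1, (Q (i+1) v - Q i v) ^ 2)
              * |ρ i (θ + δ) - ρ i (θ - δ) - δ * (2 * deriv (ρ i) θ)|‖ := le_abs_self _
    exact hOb.trans_isLittleO hgo
  refine ⟨part1, fun _ => ?_⟩
  -- Part 2
  simp only [MeasureTheory.integral_div]
  have hGO : (fun δ : ℝ => ∫ u in Set.Ico (0 : ℝ) 1, ∫ v in Set.Ico (0 : ℝ) 1,
      (Y (θ + δ) u v - Y (θ - δ) u v) ^ 2) =O[nhdsWithin 0 (Set.Ioi 0)] fun δ : ℝ => δ := by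
    have h2 : (fun δ : ℝ => M θ * δ) =O[nhdsWithin (0:ℝ) (Set.Ioi 0)] fun δ : ℝ => δ :=
      (isBigO_refl _ _).const_mul_left (M θ)
    have := part1.isBigO.add h2
    refine this.congr_left fun δ => by ring
  have hRS : (fun δ : ℝ => ∑ i ∈ Finset.Icc 1 (m-1), |ρ i (θ + δ) - ρ i (θ - δ)|)
      =O[nhdsWithin 0 (Set.Ioi 0)] fun δ : ℝ => δ := by
    refine IsBigO.fun_sum fun i hi => ?_
    have h1 : (fun δ : ℝ => ρ i (θ + δ) - ρ i (θ - δ))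
        =O[nhdsWithin (0:ℝ) (Set.Ioi 0)] fun δ : ℝ => δ := by
      have ha := (he i hi).isBigO
      have hb : (fun δ : ℝ => δ * (2 * deriv (ρ i) θ))
          =O[nhdsWithin (0:ℝ) (Set.Ioi 0)] fun δ : ℝ => δ := by
        have := (isBigO_refl (fun δ : ℝ => δ) (nhdsWithin (0:ℝ) (Set.Ioi 0))).const_mul_left
          (2 * deriv (ρ i) θ)
        refine this.congr_left fun δ => by ring
      have := ha.add hb
      refine this.congr_left fun δ => by ring
    have := h1.norm_left
    simpa [Real.norm_eq_abs] using this
  have hIO : (fun δ : ℝ => ∫ u in Set.Ico (0 : ℝ) 1, ∫ v in Set.Ico (0 : ℝ) 1,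
      (Y (θ + δ) u v - Y (θ - δ) u v)) =O[nhdsWithin 0 (Set.Ioi 0)] fun δ : ℝ => δ := by
    refine IsBigO.trans ?_ hRS
    rw [isBigO_iff]
    refine ⟨2 * Cq, ?_⟩
    filter_upwards [key] with δ hk
    rw [Real.norm_eq_abs, Real.norm_eq_abs]
    refine hk.2.trans ?_
    exact mul_le_mul_of_nonneg_left (le_abs_self _) (by linarith)
  have hA : (fun δ : ℝ => (∫ u in Set.Ico (0 : ℝ) 1, ∫ v in Set.Ico (0 : ℝ) 1,
      (Y (θ + δ) u v - Y (θ - δ) u v) ^ 2) / (4 * δ ^ 2))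
      =O[nhdsWithin 0 (Set.Ioi 0)] fun δ : ℝ => 1 / δ := by
    have h := hGO.mul (isBigO_refl (fun δ : ℝ => 1/(4*δ^2)) (nhdsWithin 0 (Set.Ioi 0)))
    have h2 : (fun δ : ℝ => δ * (1/(4*δ^2))) =O[nhdsWithin (0:ℝ) (Set.Ioi 0)]
        fun δ : ℝ => 1/δ := by
      rw [isBigO_iff]
      refine ⟨1, ?_⟩
      filter_upwards [self_mem_nhdsWithin] with δ hδ
      have hδ0 : δ ≠ 0 := ne_of_gt hδ
      have heq : δ * (1/(4*δ^2)) = (1/4) * (1/δ) := by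
        field_simp
      rw [heq, one_mul, Real.norm_eq_abs, Real.norm_eq_abs, abs_mul,
        abs_of_nonneg (by norm_num : (0:ℝ) ≤ 1/4)]
      nlinarith [abs_nonneg (1/δ)]
    have h3 := h.trans h2
    refine h3.congr_left fun δ => ?_
    rw [mul_one_div]
  have hB : (fun δ : ℝ => ((∫ u in Set.Ico (0 : ℝ) 1, ∫ v in Set.Ico (0 : ℝ) 1,
      (Y (θ + δ) u v - Y (θ - δ) u v)) / (2 * δ)) ^ 2)
      =O[nhdsWithin 0 (Set.Ioi 0)] fun δ : ℝ => 1 / δ := by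
    have h := (hIO.mul hIO).mul
      (isBigO_refl (fun δ : ℝ => 1/(4*δ^2)) (nhdsWithin 0 (Set.Ioi 0)))
    have h2 : (fun δ : ℝ => δ * δ * (1/(4*δ^2))) =O[nhdsWithin (0:ℝ) (Set.Ioi 0)]
        fun δ : ℝ => 1/δ := by
      rw [isBigO_iff]
      refine ⟨1, ?_⟩
      filter_upwards [Ioo_mem_nhdsGT_of_mem (Set.left_mem_Ico.mpr one_pos)] with δ hδ
      obtain ⟨h0, h1'⟩ := hδ
      have hδ0 : δ ≠ 0 := ne_of_gt h0
      have heq : δ * δ * (1/(4*δ^2)) = 1/4 := by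
        field_simp
      rw [heq, one_mul, Real.norm_eq_abs, Real.norm_eq_abs]
      rw [abs_of_nonneg (by norm_num : (0:ℝ) ≤ 1/4), abs_of_nonneg (by positivity)]
      have : (1:ℝ) ≤ 1/δ := by rw [le_div_iff₀ h0]; linarith
      linarith
    have h3 := h.trans h2
    refine h3.congr' ?_ (Filter.EventuallyEq.refl _ _)
    filter_upwards [self_mem_nhdsWithin] with δ hδ
    have hδ0 : δ ≠ 0 := ne_of_gt hδ
    field_simp
    ring
  exact hA.sub hB
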